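/- Let p be the characteristic polynomial of P(d/dt) with real coefficients a_0, …, a_n (a_n ≠ 0), let γ ∈ ℂ be a root of p of multiplicity exactly k, and let R be a nonzero real polynomial. Then there exists a complex polynomial Q_1 with deg Q_1 = deg R such that x(t) = t^k Q_1(t) e^{γt} satisfies a_n x^{(n)} + ⋯ + a_0 x = R(t) e^{γt} on ℝ. -/

import Mathlib

open Polynomial Finset

noncomputable abbrev Dop : Module.End ℂ (Polynomial ℂ) :=
  (derivative : Polynomial ℂ →ₗ[ℂ] Polynomial ℂ)

noncomputable def Eop (γ : ℂ) : Module.End ℂ (Polynomial ℂ) := Dop + γ • 1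

lemma Eop_pow (γ : ℂ) (j : ℕ) :
    Eop γ ^ j = ∑ i ∈ range (j + 1), ((j.choose i : ℂ) * γ ^ (j - i)) • Dop ^ i := by
  have hc : Commute Dop (γ • (1 : Module.End ℂ (Polynomial ℂ))) :=
    (Commute.one_right Dop).smul_right γ
  rw [Eop, hc.add_pow]
  refine Finset.sum_congr rfl fun i _ => ?_
  rw [_root_.smul_pow, one_pow, mul_smul_comm, mul_one, smul_mul_assoc,
    ← (Nat.cast_commute (j.choose i) (Dop ^ i)).eq, ← nsmul_eq_mul,
    ← Nat.cast_smul_eq_nsmul ℂ, smul_smul, mul_comm]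

lemma aux1 (γ : ℂ) (j : ℕ) (q : Polynomial ℂ) (t : ℝ) :
    iteratedDeriv j (fun s : ℝ => q.eval (s : ℂ) * Complex.exp (γ * s)) t
      = ((Eop γ ^ j) q).eval (t : ℂ) * Complex.exp (γ * t) := by
  induction j generalizing q with
  | zero => simp
  | succ j ih =>
    rw [iteratedDeriv_succ']
    have hE : Eop γ q = derivative q + C γ * q := by simp [Eop, smul_eq_C_mul]
    have hderiv : (deriv fun s : ℝ => q.eval (s : ℂ) * Complex.exp (γ * s))
        = fun s : ℝ => (Eop γ q).eval (s : ℂ) * Complex.exp (γ * s) := by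
      funext s
      have hq : HasDerivAt (fun y : ℝ => q.eval (y : ℂ)) ((derivative q).eval (s : ℂ)) s :=
        (q.hasDerivAt (s : ℂ)).comp_ofReal
      have hexp : HasDerivAt (fun y : ℝ => Complex.exp (γ * y))
          (Complex.exp (γ * s) * γ) s := by
        have h1 : HasDerivAt (fun z : ℂ => Complex.exp (γ * z))
            (Complex.exp (γ * s) * (γ * 1)) (s : ℂ) :=
          (Complex.hasDerivAt_exp (γ * s)).comp (s : ℂ) ((hasDerivAt_id (s : ℂ)).const_mul γ)
        simpa using h1.comp_ofReal
      have : deriv (fun s : ℝ => q.eval (s : ℂ) * Complex.exp (γ * s)) s = _ := (hq.mul hexp).deriv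
      rw [this, hE]
      simp [eval_add, eval_mul]
      ring
    rw [hderiv, ih (Eop γ q), pow_succ, Module.End.mul_apply]

lemma bval (n : ℕ) (a : ℕ → ℝ) (γ : ℂ) (i : ℕ) :
    aeval γ (Polynomial.derivative^[i] (∑ j ∈ range (n+1), C (a j) * X ^ j))
      = ∑ j ∈ range (n+1), (a j : ℂ) * (j.descFactorial i) * γ ^ (j - i) := by
  rw [iterate_derivative_sum, map_sum]
  refine Finset.sum_congr rfl fun j _ => ?_
  rw [iterate_derivative_C_mul, iterate_derivative_X_pow_eq_smul]
  simp [Algebra.smul_def]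
  ring

lemma cval (n : ℕ) (a : ℕ → ℝ) (γ : ℂ) (i : ℕ) :
    (aeval γ (Polynomial.derivative^[i] (∑ j ∈ range (n+1), C (a j) * X ^ j)))
        / (Nat.factorial i : ℂ)
      = ∑ j ∈ range (n+1), (a j : ℂ) * (j.choose i : ℂ) * γ ^ (j - i) := by
  rw [bval, div_eq_iff (by exact_mod_cast (Nat.factorial_ne_zero i) : (Nat.factorial i : ℂ) ≠ 0)]
  rw [Finset.sum_mul]
  refine Finset.sum_congr rfl fun j _ => ?_
  rw [Nat.descFactorial_eq_factorial_mul_choose]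
  push_cast
  ring

lemma opEq (n : ℕ) (a : ℕ → ℝ) (γ : ℂ) :
    ∑ j ∈ range (n+1), (a j : ℂ) • Eop γ ^ j
      = ∑ i ∈ range (n+1),
          ((aeval γ (Polynomial.derivative^[i] (∑ j ∈ range (n+1), C (a j) * X ^ j)))
            / (Nat.factorial i : ℂ)) • Dop ^ i := by
  calc ∑ j ∈ range (n+1), (a j : ℂ) • Eop γ ^ j
      = ∑ j ∈ range (n+1), ∑ i ∈ range (n+1),
          ((a j : ℂ) * (j.choose i : ℂ) * γ ^ (j-i)) • Dop ^ i := by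
        refine Finset.sum_congr rfl fun j hj => ?_
        rw [Eop_pow, Finset.smul_sum]
        rw [Finset.sum_subset (Finset.range_subset_range.2
          (by simp only [Finset.mem_range] at hj; omega : j + 1 ≤ n + 1))
          (fun i _ hi => by
            simp only [Finset.mem_range, not_lt] at hi
            have : j.choose i = 0 := Nat.choose_eq_zero_of_lt (by omega)
            simp [this])]
        refine Finset.sum_congr rfl fun i _ => ?_
        rw [smul_smul]
        congr 1
        ring
    _ = ∑ i ∈ range (n+1),
          (∑ j ∈ range (n+1), (a j : ℂ) * (j.choose i : ℂ) * γ ^ (j-i)) • Dop ^ i := by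
        rw [Finset.sum_comm]
        exact Finset.sum_congr rfl fun i _ => (Finset.sum_smul).symm
    _ = _ := Finset.sum_congr rfl fun i _ => by rw [cval]

noncomputable def Nop (n k : ℕ) (c : ℕ → ℂ) (Q : Polynomial ℂ) : Polynomial ℂ :=
  ∑ i ∈ range (n+1), C (c i) * Polynomial.derivative^[i] (X ^ k * Q)

lemma iter_deriv_add (i : ℕ) (f g : Polynomial ℂ) :
    Polynomial.derivative^[i] (f + g)
      = Polynomial.derivative^[i] f + Polynomial.derivative^[i] g := by
  simp only [← Module.End.pow_apply, map_add]

lemma Nop_add (n k : ℕ) (c : ℕ → ℂ) (Q Q' : Polynomial ℂ) :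
    Nop n k c (Q + Q') = Nop n k c Q + Nop n k c Q' := by
  simp [Nop, mul_add, iter_deriv_add, Finset.sum_add_distrib]

lemma Nop_coeff (n k : ℕ) (c : ℕ → ℂ) (hk : k ≤ n) (hc0 : ∀ i < k, c i = 0)
    (Q : Polynomial ℂ) :
    (Nop n k c Q).coeff Q.natDegree
      = c k * ((Q.natDegree + k).descFactorial k : ℂ) * Q.leadingCoeff := by
  rw [Nop, finset_sum_coeff, Finset.sum_eq_single k]
  · rw [coeff_C_mul, coeff_iterate_derivative, coeff_X_pow_mul]
    rw [nsmul_eq_mul, leadingCoeff]; ring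
  · intro i _ hne
    rcases lt_or_gt_of_ne hne with h | h
    · simp [hc0 i h]
    · rw [coeff_C_mul, coeff_iterate_derivative]
      have h2 : Q.natDegree + i = (Q.natDegree + (i - k)) + k := by omega
      have h3 : (X ^ k * Q : Polynomial ℂ).coeff (Q.natDegree + i) = 0 := by
        rw [h2, coeff_X_pow_mul]
        exact coeff_eq_zero_of_natDegree_lt (by omega)
      simp [h3]
  · intro h
    exact absurd (Finset.mem_range.2 (by omega)) h

lemma Nop_natDegree_le (n k : ℕ) (c : ℕ → ℂ) (hc0 : ∀ i < k, c i = 0) (Q : Polynomial ℂ) :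
    (Nop n k c Q).natDegree ≤ Q.natDegree := by
  apply natDegree_sum_le_of_forall_le
  intro i _
  by_cases h : i < k
  · simp [hc0 i h]
  · refine (natDegree_C_mul_le _ _).trans ?_
    refine (natDegree_iterate_derivative _ _).trans ?_
    have hx : (X ^ k * Q : Polynomial ℂ).natDegree ≤ k + Q.natDegree :=
      natDegree_mul_le.trans (by simp [natDegree_X_pow])
    omega

lemma Nsurj (n k : ℕ) (c : ℕ → ℂ) (hk : k ≤ n) (hc0 : ∀ i < k, c i = 0) (hck : c k ≠ 0)
    (S : Polynomial ℂ) : ∃ Q, Nop n k c Q = S ∧ Q.degree = S.degree := by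
  suffices h : ∀ m, ∀ S : Polynomial ℂ, S.natDegree < m →
      ∃ Q, Nop n k c Q = S ∧ Q.degree = S.degree from
    h (S.natDegree + 1) S (Nat.lt_succ_self _)
  intro m
  induction m with
  | zero => exact fun S h => absurd h (Nat.not_lt_zero _)
  | succ m ih =>
    intro S hS
    by_cases h0 : S = 0
    · exact ⟨0, by simp [Nop, h0], by simp [h0]⟩
    set d := S.natDegree with hd
    set u : ℂ := c k * ((d + k).descFactorial k : ℂ) with hu_def
    have hdF : ((d + k).descFactorial k : ℂ) ≠ 0 := by
      have : (d + k).descFactorial k ≠ 0 := by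
        rw [Ne, Nat.descFactorial_eq_zero_iff_lt]; omega
      exact_mod_cast this
    have hu : u ≠ 0 := mul_ne_zero hck hdF
    have hlc : S.leadingCoeff ≠ 0 := leadingCoeff_ne_zero.2 h0
    have hq0ne : S.leadingCoeff / u ≠ 0 := div_ne_zero hlc hu
    set Q₀ : Polynomial ℂ := C (S.leadingCoeff / u) * X ^ d with hQ₀
    have hq0deg : Q₀.natDegree = d := natDegree_C_mul_X_pow d _ hq0ne
    have hq0lc : Q₀.leadingCoeff = S.leadingCoeff / u := leadingCoeff_C_mul_X_pow _ _
    have hN0coeff : (Nop n k c Q₀).coeff d = S.leadingCoeff := by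
      have h1 := Nop_coeff n k c hk hc0 Q₀
      rw [hq0deg, hq0lc] at h1
      rw [h1, ← hu_def, mul_div_cancel₀ _ hu]
    have hNne : Nop n k c Q₀ ≠ 0 := by
      intro h
      rw [h, coeff_zero] at hN0coeff
      exact hlc hN0coeff.symm
    have hSdeg : S.degree = (d : ℕ) := degree_eq_natDegree h0
    have hNdeg : (Nop n k c Q₀).degree = S.degree := by
      rw [hSdeg]
      refine le_antisymm ?_ (le_degree_of_ne_zero (by rw [hN0coeff]; exact hlc))
      refine degree_le_natDegree.trans ?_
      exact_mod_cast (Nop_natDegree_le n k c hc0 Q₀).trans_eq hq0deg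
    have hNnat : (Nop n k c Q₀).natDegree = d :=
      natDegree_eq_of_degree_eq_some (hNdeg.trans hSdeg)
    have hNlc : (Nop n k c Q₀).leadingCoeff = S.leadingCoeff := by
      rw [leadingCoeff, hNnat, hN0coeff]
    have hsub : (S - Nop n k c Q₀).degree < S.degree :=
      degree_sub_lt hNdeg.symm h0 hNlc.symm
    have hQ₀deg : Q₀.degree = S.degree := by
      rw [hQ₀, degree_C_mul_X_pow d hq0ne, hSdeg]
    by_cases h1 : S - Nop n k c Q₀ = 0
    · exact ⟨Q₀, (sub_eq_zero.1 h1).symm, hQ₀deg⟩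
    · obtain ⟨Q', hQ'1, hQ'2⟩ := ih (S - Nop n k c Q₀)
        (by have := natDegree_lt_natDegree h1 hsub; omega)
      refine ⟨Q₀ + Q', ?_, ?_⟩
      · rw [Nop_add, hQ'1]; ring
      · rw [degree_add_eq_left_of_degree_lt (by rw [hQ'2, hQ₀deg]; exact hsub), hQ₀deg]

theorem stmt_6 (n k : ℕ) (a : ℕ → ℝ) (han : a n ≠ 0) (p : Polynomial ℝ)
    (hp : p = ∑ j ∈ range (n + 1), C (a j) * X ^ j)
    (γ : ℂ)
    (hroot : ∀ j < k, Polynomial.aeval γ (Polynomial.derivative^[j] p) = 0)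
    (hmult : Polynomial.aeval γ (Polynomial.derivative^[k] p) ≠ 0)
    (R : Polynomial ℝ) (hR : R ≠ 0) :
    ∃ Q₁ : Polynomial ℂ, Q₁.degree = R.degree ∧
      ∀ t : ℝ,
        ∑ j ∈ range (n + 1),
            (a j : ℂ) *
              iteratedDeriv j
                (fun s : ℝ => (s : ℂ) ^ k * Q₁.eval (s : ℂ) * Complex.exp (γ * s)) t
          = ((R.eval t : ℝ) : ℂ) * Complex.exp (γ * t) := by
  have hpdeg : p.natDegree ≤ n := by
    rw [hp]
    apply natDegree_sum_le_of_forall_le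
    intro j hj
    refine (natDegree_C_mul_le _ _).trans ?_
    simp only [natDegree_X_pow]
    simpa using Nat.lt_succ_iff.1 (Finset.mem_range.1 hj)
  have hk : k ≤ n := by
    by_contra h
    exact hmult (by rw [iterate_derivative_eq_zero (by omega)]; simp)
  set c : ℕ → ℂ := fun i =>
    (aeval γ (Polynomial.derivative^[i] p)) / (Nat.factorial i : ℂ) with hc_def
  have hc0 : ∀ i < k, c i = 0 := fun i h => by simp [hc_def, hroot i h]
  have hck : c k ≠ 0 := div_ne_zero hmult
    (by exact_mod_cast Nat.factorial_ne_zero k)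
  obtain ⟨Q₁, hQeq, hQdeg⟩ := Nsurj n k c hk hc0 hck (R.map (algebraMap ℝ ℂ))
  refine ⟨Q₁, ?_, ?_⟩
  · rw [hQdeg, degree_map_eq_of_injective (algebraMap ℝ ℂ).injective]
  · intro t
    set q : Polynomial ℂ := X ^ k * Q₁ with hq
    have hfun : (fun s : ℝ => (s : ℂ) ^ k * Q₁.eval (s : ℂ) * Complex.exp (γ * s))
        = fun s : ℝ => q.eval (s : ℂ) * Complex.exp (γ * s) := by
      funext s
      simp [hq, eval_mul, eval_pow]
    rw [hfun]
    have step1 : ∑ j ∈ range (n + 1), (a j : ℂ) *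
        iteratedDeriv j (fun s : ℝ => q.eval (s : ℂ) * Complex.exp (γ * s)) t
        = ((∑ j ∈ range (n + 1), (a j : ℂ) • Eop γ ^ j) q).eval (t : ℂ)
            * Complex.exp (γ * t) := by
      simp_rw [aux1 γ _ q t]
      rw [LinearMap.sum_apply, eval_finset_sum, Finset.sum_mul]
      refine Finset.sum_congr rfl fun j _ => ?_
      simp only [LinearMap.smul_apply, eval_smul, smul_eq_mul]
      ring
    rw [step1, opEq n a γ]
    have step2 : ((∑ i ∈ range (n + 1),
        ((aeval γ (Polynomial.derivative^[i] (∑ j ∈ range (n+1), C (a j) * X ^ j)))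
          / (Nat.factorial i : ℂ)) • Dop ^ i) q)
        = Nop n k c Q₁ := by
      rw [LinearMap.sum_apply, Nop]
      refine Finset.sum_congr rfl fun i _ => ?_
      rw [LinearMap.smul_apply, Module.End.pow_apply, smul_eq_C_mul, hc_def, hp, hq]
    rw [step2, hQeq, eval_map, ← aeval_def]
    congr 1
    rw [show ((t : ℝ) : ℂ) = algebraMap ℝ ℂ t from rfl, aeval_algebraMap_apply]
    simp
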